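/- Let G be a totally ordered abelian group, u > 0 in G, and x ∈ G with 0 ≤ x ≤ n • u for some n ≥ 1. Define a_k = ((x - k • u) ⊓ u) ⊔ 0 for 0 ≤ k ≤ n-1. Then x = a_0 + a_1 + ⋯ + a_{n-1}. -/

import Mathlib

theorem sum_truncations_eq {G : Type*} [AddCommGroup G] [LinearOrder G]
    [IsOrderedAddMonoid G]
    (u : G) (hu : 0 < u) (n : ℕ) (hn : 1 ≤ n) (x : G)
    (hx0 : 0 ≤ x) (hxn : x ≤ n • u) :
    x = ∑ k ∈ Finset.range n, (((x - k • u) ⊓ u) ⊔ 0) := by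
  have key : ∀ k : ℕ, ((x - k • u) ⊓ u) ⊔ 0 = (x ⊓ (k+1) • u) - (x ⊓ k • u) := by
    intro k
    rcases le_total x (k • u) with h | h
    · have h1 : x ⊓ k • u = x := inf_eq_left.mpr h
      have h2 : x ⊓ (k+1) • u = x := inf_eq_left.mpr (h.trans (by
        rw [succ_nsmul]; exact le_add_of_nonneg_right hu.le))
      have h3 : x - k • u ≤ 0 := sub_nonpos.mpr h
      have h4 : (x - k • u) ⊓ u ≤ 0 := inf_le_left.trans h3
      rw [h1, h2, sub_self, sup_eq_right.mpr h4]
    · have h3 : 0 ≤ x - k • u := sub_nonneg.mpr h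
      have h4 : 0 ≤ (x - k • u) ⊓ u := le_inf h3 hu.le
      rw [sup_eq_left.mpr h4, inf_eq_right.mpr h, succ_nsmul]
      rcases le_total x (k • u + u) with h5 | h5
      · rw [inf_eq_left.mpr h5, inf_eq_left.mpr (sub_le_iff_le_add'.mpr h5)]
      · rw [inf_eq_right.mpr h5, inf_eq_right.mpr (le_sub_iff_add_le'.mpr h5)]
        abel
  calc x = x ⊓ n • u - x ⊓ 0 • u := by
        rw [zero_smul, inf_eq_right.mpr hx0, inf_eq_left.mpr hxn, sub_zero]
    _ = ∑ k ∈ Finset.range n, ((x ⊓ (k+1) • u) - (x ⊓ k • u)) :=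
        (Finset.sum_range_sub (fun k => x ⊓ k • u) n).symm
    _ = ∑ k ∈ Finset.range n, (((x - k • u) ⊓ u) ⊔ 0) := by
        simp_rw [key]
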